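/- arXiv:1705.08218 — 2 statements merged into one kernel-verified Lean document; each statement's English description precedes it below -/
import Mathlib

section
/- Correctness of the compact single-sample flow encoding: for a fixed set F of open edges, there exist z : V∖{s} → {0,1} and a nonnegative flow x with net outflow Σ_{k≠s} z_k at s, net inflow z_r at each r ≠ s, x supported on F, and 0 ≤ x_e ≤ |V|−1, such that z_k = 1 for every k reachable from s via F, if and only if z is the indicator of reachability restricted to the reachable set; moreover the maximum of Σ_{k≠s} w(k) z_k over all feasible (z, x) (with w ≥ 0) equals Σ_{k reachable from s via F, k≠s} w(k). -/
open Finset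
open scoped Classical

lemma chain_suffix {α : Type*} (r : α → α → Prop) :
    ∀ (l : List α) (c : α), List.Chain r c l → ∀ a ∈ c :: l,
      ∃ l', List.Chain r a l' ∧ (a :: l') <:+ (c :: l) := by
  intro l
  induction l with
  | nil =>
    intro c _ a ha
    simp only [List.mem_singleton] at ha
    subst ha
    exact ⟨[], List.Chain.nil, List.suffix_refl _⟩
  | cons d t ih =>
    intro c hc a ha
    rcases List.mem_cons.1 ha with h | h
    · subst h; exact ⟨d :: t, hc, List.suffix_refl _⟩
    · obtain ⟨l', h1, h2⟩ := ih d (List.chain_of_chain_cons hc) a h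
      exact ⟨l', h1, h2.trans (List.suffix_cons _ _)⟩

lemma exists_nodup_chain {α : Type*} (r : α → α → Prop) {a b : α}
    (h : Relation.ReflTransGen r a b) :
    ∃ l, List.Chain r a l ∧ (a :: l).Nodup ∧ (a :: l).getLast? = some b := by
  induction h using Relation.ReflTransGen.head_induction_on with
  | refl => exact ⟨[], List.Chain.nil, by simp, by simp⟩
  | @head a' c hac _ ih =>
    obtain ⟨l, hchain, hnodup, hlast⟩ := ih
    by_cases hmem : a' ∈ c :: l
    · obtain ⟨l', h1, h2⟩ := chain_suffix r l c hchain a' hmem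
      refine ⟨l', h1, (h2.sublist).nodup hnodup, ?_⟩
      obtain ⟨p, hp⟩ := h2
      rw [← hlast, ← hp]
      exact (List.getLast?_append_of_ne_nil _ (by simp)).symm
    · refine ⟨c :: l, List.Chain.cons hac hchain, by simp [hnodup, hmem], ?_⟩
      rw [List.getLast?_cons_cons]
      exact hlast

lemma unit_flow {V E : Type} [Fintype V] [Fintype E] (src dst : E → V) (F : Set E) :
    ∀ (l : List V) (a b : V),
      List.Chain (fun u v => ∃ e, e ∈ F ∧ src e = u ∧ dst e = v) a l →
      (a :: l).Nodup → (a :: l).getLast? = some b →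
      ∃ x : E → ℝ, (∀ e, 0 ≤ x e) ∧ (∀ e, x e ≤ 1) ∧
        (∀ e, x e ≠ 0 → e ∈ F ∧ src e ∈ a :: l) ∧
        (∀ v, (∑ e with src e = v, x e) - (∑ e with dst e = v, x e)
            = (if v = a then 1 else 0) - (if v = b then 1 else 0)) := by
  intro l
  induction l with
  | nil =>
    intro a b _ _ hlast
    simp only [List.getLast?_singleton, Option.some.injEq] at hlast
    subst hlast
    exact ⟨0, by simp, by simp, by simp, by simp⟩
  | cons c t ih =>
    intro a b hchain hnodup hlast
    obtain ⟨hac, hct⟩ := List.chain_cons.1 hchain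
    obtain ⟨e₀, he₀F, he₀s, he₀d⟩ := hac
    have hnodup' : (c :: t).Nodup := (List.nodup_cons.1 hnodup).2
    have hmem : a ∉ c :: t := (List.nodup_cons.1 hnodup).1
    obtain ⟨y, hy0, hy1, hysupp, hydiv⟩ :=
      ih c b hct hnodup' (by rw [← List.getLast?_cons_cons]; exact hlast)
    have hy_e₀ : y e₀ = 0 := by
      by_contra h
      exact hmem (he₀s ▸ (hysupp e₀ h).2)
    refine ⟨fun e => y e + (if e = e₀ then 1 else 0), ?_, ?_, ?_, ?_⟩
    · intro e
      have := hy0 e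
      by_cases he : e = e₀ <;> simp [he] <;> linarith
    · intro e
      by_cases he : e = e₀
      · subst he; simp [hy_e₀]
      · simpa [he] using hy1 e
    · intro e hx
      by_cases he : e = e₀
      · subst he; exact ⟨he₀F, by rw [he₀s]; exact List.mem_cons_self⟩
      · have hne : y e ≠ 0 := by simpa [he] using hx
        exact ⟨(hysupp e hne).1, List.mem_cons_of_mem _ (hysupp e hne).2⟩
    · intro v
      have hsrc : (∑ e with src e = v, (if e = e₀ then (1:ℝ) else 0))
          = if v = a then 1 else 0 := by
        rw [Finset.sum_ite_eq' (Finset.univ.filter (fun e => src e = v)) e₀ (fun _ => (1:ℝ))]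
        simp [Finset.mem_filter, he₀s, eq_comm]
      have hdst : (∑ e with dst e = v, (if e = e₀ then (1:ℝ) else 0))
          = if v = c then 1 else 0 := by
        rw [Finset.sum_ite_eq' (Finset.univ.filter (fun e => dst e = v)) e₀ (fun _ => (1:ℝ))]
        simp [Finset.mem_filter, he₀d, eq_comm]
      have key := hydiv v
      have hc : (if v = c then (1:ℝ) else 0) - (if v = b then 1 else 0)
          = (∑ e with src e = v, y e) - (∑ e with dst e = v, y e) := key.symm
      simp only [Finset.sum_add_distrib, hsrc, hdst]
      linarith

lemma cut_zero {V E : Type} [Fintype V] [Fintype E]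
    (src dst : E → V) (F : Set E) (s : V) (z : V → ℝ) (x : E → ℝ)
    (hz : ∀ v, v ≠ s → 0 ≤ z v)
    (hx0 : ∀ e, 0 ≤ x e) (hxF : ∀ e, e ∉ F → x e = 0)
    (hcons : ∀ r, r ≠ s → (∑ e with dst e = r, x e) - (∑ e with src e = r, x e) = z r) :
    ∀ k, k ≠ s →
      ¬ Relation.ReflTransGen (fun u v => ∃ e, e ∈ F ∧ src e = u ∧ dst e = v) s k →
      z k = 0 := by
  set R : V → Prop :=
    fun k => Relation.ReflTransGen (fun u v => ∃ e, e ∈ F ∧ src e = u ∧ dst e = v) s k with hR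
  intro k hk hnr
  set U : Finset V := Finset.univ.filter (fun v => v ≠ s ∧ ¬ R v) with hU
  have hkU : k ∈ U := by
    simp only [hU, Finset.mem_filter, Finset.mem_univ, true_and]
    exact ⟨hk, hnr⟩
  have hsum : ∑ v ∈ U, z v
      = (∑ e with dst e ∈ U, x e) - (∑ e with src e ∈ U, x e) := by
    rw [← Finset.sum_fiberwise_eq_sum_filter Finset.univ U dst x,
        ← Finset.sum_fiberwise_eq_sum_filter Finset.univ U src x,
        ← Finset.sum_sub_distrib]
    refine Finset.sum_congr rfl fun v hv => ?_
    exact (hcons v (Finset.mem_filter.1 hv).2.1).symm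
  have hle : (∑ e with dst e ∈ U, x e) ≤ (∑ e with src e ∈ U, x e) := by
    rw [← Finset.sum_filter_ne_zero (Finset.univ.filter (fun e => dst e ∈ U))]
    refine Finset.sum_le_sum_of_subset_of_nonneg ?_ (fun e _ _ => hx0 e)
    intro e he
    simp only [Finset.mem_filter, Finset.mem_univ, true_and, hU] at he ⊢
    obtain ⟨⟨hdne, hdnr⟩, hxe⟩ := he
    have heF : e ∈ F := by
      by_contra h
      exact hxe (hxF e h)
    have hsnr : ¬ R (src e) := by
      intro h
      exact hdnr (h.tail ⟨e, heF, rfl, rfl⟩)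
    have hsne : src e ≠ s := by
      intro h
      exact hsnr (h ▸ Relation.ReflTransGen.refl)
    exact ⟨hsne, hsnr⟩
  have hzero : ∑ v ∈ U, z v = 0 := by
    have h1 : ∑ v ∈ U, z v ≤ 0 := by linarith
    have h2 : 0 ≤ ∑ v ∈ U, z v :=
      Finset.sum_nonneg fun v hv => hz v (Finset.mem_filter.1 hv).2.1
    linarith
  exact (Finset.sum_eq_zero_iff_of_nonneg
    (fun v hv => hz v (Finset.mem_filter.1 hv).2.1)).1 hzero k hkU

lemma exists_flow {V E : Type} [Fintype V] [Fintype E]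
    (src dst : E → V) (F : Set E) (s : V) :
    ∃ x : E → ℝ, (∀ e, 0 ≤ x e) ∧ (∀ e, e ∉ F → x e = 0) ∧
      (∀ e, x e ≤ (Fintype.card V : ℝ) - 1) ∧
      ((∑ e with src e = s, x e) - (∑ e with dst e = s, x e)
        = ∑ v with v ≠ s, (if Relation.ReflTransGen
            (fun u v => ∃ e, e ∈ F ∧ src e = u ∧ dst e = v) s v then (1:ℝ) else 0)) ∧
      (∀ r, r ≠ s → (∑ e with dst e = r, x e) - (∑ e with src e = r, x e)
        = if Relation.ReflTransGen
            (fun u v => ∃ e, e ∈ F ∧ src e = u ∧ dst e = v) s r then (1:ℝ) else 0) := by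
  set R : V → Prop :=
    fun k => Relation.ReflTransGen (fun u v => ∃ e, e ∈ F ∧ src e = u ∧ dst e = v) s k with hR
  set T : Finset V := Finset.univ.filter (fun v => v ≠ s ∧ R v) with hT
  have hmemT : ∀ k, k ∈ T ↔ (k ≠ s ∧ R k) := by
    intro k; simp [hT]
  have hky : ∀ k : V, ∃ y : E → ℝ, k ∈ T →
      (∀ e, 0 ≤ y e) ∧ (∀ e, y e ≤ 1) ∧ (∀ e, y e ≠ 0 → e ∈ F) ∧
      (∀ v, (∑ e with src e = v, y e) - (∑ e with dst e = v, y e)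
          = (if v = s then 1 else 0) - (if v = k then 1 else 0)) := by
    intro k
    by_cases hk : k ∈ T
    · obtain ⟨l, hchain, hnodup, hlast⟩ := exists_nodup_chain _ (((hmemT k).1 hk).2)
      obtain ⟨y, h0, h1, hs, hd⟩ := unit_flow src dst F l s k hchain hnodup hlast
      exact ⟨y, fun _ => ⟨h0, h1, fun e he => (hs e he).1, hd⟩⟩
    · exact ⟨0, fun h => absurd h hk⟩
  choose g hg using hky
  refine ⟨fun e => ∑ k ∈ T, g k e, ?_, ?_, ?_, ?_, ?_⟩
  · intro e
    exact Finset.sum_nonneg fun k hk => ((hg k hk).1 e)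
  · intro e he
    refine Finset.sum_eq_zero fun k hk => ?_
    by_contra h
    exact he ((hg k hk).2.2.1 e h)
  · intro e
    have hb : ∑ k ∈ T, g k e ≤ (T.card : ℝ) := by
      calc ∑ k ∈ T, g k e ≤ ∑ k ∈ T, (1:ℝ) :=
            Finset.sum_le_sum fun k hk => (hg k hk).2.1 e
        _ = T.card := by simp
    have hcard : T.card < Fintype.card V := by
      have : T ⊂ Finset.univ := by
        refine Finset.ssubset_univ_iff.2 fun h => ?_
        have : s ∈ T := h ▸ Finset.mem_univ s
        exact ((hmemT s).1 this).1 rfl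
      simpa using Finset.card_lt_card this
    have : (T.card : ℝ) ≤ (Fintype.card V : ℝ) - 1 := by
      have : (T.card : ℝ) + 1 ≤ (Fintype.card V : ℝ) := by exact_mod_cast hcard
      linarith
    linarith
  · have h1 : ∀ (p : E → Prop) [DecidablePred p],
        ∑ e ∈ Finset.univ.filter p, ∑ k ∈ T, g k e
          = ∑ k ∈ T, ∑ e ∈ Finset.univ.filter p, g k e := fun p _ => Finset.sum_comm
    rw [h1, h1, ← Finset.sum_sub_distrib]
    have h2 : ∀ k ∈ T, (∑ e with src e = s, g k e) - (∑ e with dst e = s, g k e) = (1:ℝ) := by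
      intro k hk
      rw [(hg k hk).2.2.2 s]
      have hks : s ≠ k := fun h => ((hmemT k).1 hk).1 h.symm
      simp [hks]
    rw [Finset.sum_congr rfl h2, Finset.sum_const, nsmul_eq_mul, mul_one]
    rw [Finset.sum_boole, Finset.filter_filter]
  · intro r hr
    have h1 : ∀ (p : E → Prop) [DecidablePred p],
        ∑ e ∈ Finset.univ.filter p, ∑ k ∈ T, g k e
          = ∑ k ∈ T, ∑ e ∈ Finset.univ.filter p, g k e := fun p _ => Finset.sum_comm
    rw [h1, h1, ← Finset.sum_sub_distrib]
    have h2 : ∀ k ∈ T, (∑ e with dst e = r, g k e) - (∑ e with src e = r, g k e)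
        = if r = k then (1:ℝ) else 0 := by
      intro k hk
      have hd := (hg k hk).2.2.2 r
      rw [if_neg hr] at hd
      linarith [hd]
    rw [Finset.sum_congr rfl h2, Finset.sum_ite_eq T r (fun _ => (1:ℝ))]
    by_cases hRr : R r
    · have hRr' : Relation.ReflTransGen (fun u v => ∃ e, e ∈ F ∧ src e = u ∧ dst e = v) s r := hRr
      simp [hmemT, hr, hRr, hRr']
    · have hRr' : ¬ Relation.ReflTransGen (fun u v => ∃ e, e ∈ F ∧ src e = u ∧ dst e = v) s r := hRr
      simp [hmemT, hRr, hRr']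

theorem stmt9 {V E : Type} [Fintype V] [Fintype E]
    (src dst : E → V) (F : Set E) (s : V) (w : V → ℝ) (hw : ∀ v, 0 ≤ w v) :
    let ReachF : V → Prop := fun k =>
      Relation.ReflTransGen (fun u v => ∃ e, e ∈ F ∧ src e = u ∧ dst e = v) s k
    let Feas : (V → ℝ) → (E → ℝ) → Prop := fun z x =>
      (∀ v, v ≠ s → 0 ≤ z v ∧ z v ≤ 1) ∧
      (∀ e, 0 ≤ x e) ∧ (∀ e, e ∉ F → x e = 0) ∧
      (∀ e, x e ≤ (Fintype.card V : ℝ) - 1) ∧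
      ((∑ e with src e = s, x e) - (∑ e with dst e = s, x e) = ∑ v with v ≠ s, z v) ∧
      (∀ r, r ≠ s → (∑ e with dst e = r, x e) - (∑ e with src e = r, x e) = z r)
    -- (z, x) is feasible with z = 1 on the reachable set iff z is the reachability indicator
    (∀ z : V → ℝ,
      ((∃ x, Feas z x ∧ ∀ k, k ≠ s → ReachF k → z k = 1) ↔
        ((∃ x, Feas z x) ∧ ∀ k, k ≠ s → z k = if ReachF k then 1 else 0))) ∧
    -- the maximum of the weighted objective over feasible (z, x) is the reachable weight
    IsGreatest {val : ℝ | ∃ z x, Feas z x ∧ val = ∑ v with v ≠ s, w v * z v}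
      (∑ v with v ≠ s ∧ ReachF v, w v) := by
  intro ReachF Feas
  constructor
  · intro z
    constructor
    · rintro ⟨x, hfeas, hone⟩
      obtain ⟨hzb, hx0, hxF, hxc, hdivs, hcons⟩ := hfeas
      refine ⟨⟨x, hzb, hx0, hxF, hxc, hdivs, hcons⟩, ?_⟩
      intro k hk
      by_cases hr : ReachF k
      · rw [if_pos hr]; exact hone k hk hr
      · rw [if_neg hr]
        exact cut_zero src dst F s z x (fun v hv => (hzb v hv).1) hx0 hxF hcons k hk hr
    · rintro ⟨⟨x, hfeas⟩, hind⟩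
      refine ⟨x, hfeas, fun k hk hr => ?_⟩
      rw [hind k hk, if_pos hr]
  · constructor
    · obtain ⟨x, hx0, hxF, hxc, hdivs, hdivr⟩ := exists_flow src dst F s
      refine ⟨fun v => if ReachF v then 1 else 0, x, ⟨?_, hx0, hxF, hxc, ?_, ?_⟩, ?_⟩
      · intro v _; by_cases h : ReachF v <;> simp [h]
      · exact hdivs
      · exact hdivr
      · rw [← Finset.filter_filter, Finset.sum_filter]
        refine Finset.sum_congr rfl fun v hv => ?_
        by_cases h : ReachF v
        · have h' : Relation.ReflTransGen (fun u v => ∃ e, e ∈ F ∧ src e = u ∧ dst e = v) s v := h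
          simp [h, h']
        · have h' : ¬ Relation.ReflTransGen (fun u v => ∃ e, e ∈ F ∧ src e = u ∧ dst e = v) s v := h
          simp [h, h']
    · rintro val ⟨z, x, hfeas, rfl⟩
      obtain ⟨hzb, hx0, hxF, hxc, hdivs, hcons⟩ := hfeas
      have hz0 : ∀ k, k ≠ s → ¬ ReachF k → z k = 0 :=
        cut_zero src dst F s z x (fun v hv => (hzb v hv).1) hx0 hxF hcons
      rw [← Finset.sum_filter_add_sum_filter_not
        (Finset.univ.filter (fun v => v ≠ s)) ReachF (fun v => w v * z v)]
      have hzero : ∑ v ∈ (Finset.univ.filter (fun v => v ≠ s)).filter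
          (fun v => ¬ ReachF v), w v * z v = 0 := by
        refine Finset.sum_eq_zero fun v hv => ?_
        simp only [Finset.mem_filter, Finset.mem_univ, true_and] at hv
        rw [hz0 v hv.1 hv.2, mul_zero]
      rw [hzero, add_zero, Finset.filter_filter]
      refine Finset.sum_le_sum fun v hv => ?_
      simp only [Finset.mem_filter, Finset.mem_univ, true_and] at hv
      exact mul_le_of_le_one_right (hw v) (hzb v hv.1).2
end

section
/- For the relaxed MIP of Figure 2 with a single sample, any feasible (z, x, y) with fractional z ∈ [0,1]^{V∖{s}} can be rounded: the vector z* defined by z*_k = 1 if k is reachable from s via edges open under (θ, y) and 0 otherwise is also feasible and achieves objective value at least that of z; hence the LP relaxation in z is tight (the optimum is attained at integral z). -/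
open Finset
open scoped Classical

def Reach {V E : Type} (src dst : E → V) (openE : E → Prop) (s v : V) : Prop :=
  Relation.ReflTransGen (fun u v => ∃ e, openE e ∧ src e = u ∧ dst e = v) s v

lemma trunc {V : Type} (R : V → V → Prop) (v : V) :
    ∀ (l : List V) (s : V), l.Chain R s → v ∈ s :: l →
    ∃ l' : List V, l'.Chain R s ∧ (s :: l').getLast (by simp) = v ∧
      List.Sublist (s :: l') (s :: l) := by
  intro l
  induction l with
  | nil =>
    intro s _ hv
    refine ⟨[], List.Chain.nil, ?_, List.Sublist.refl _⟩
    simp at hv; simp [hv]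
  | cons a t ih =>
    intro s hc hv
    rcases List.mem_cons.mp hv with h | hv'
    · exact ⟨[], List.Chain.nil, by simp [h], (List.nil_sublist _).cons₂ s⟩
    · obtain ⟨hsa, hct⟩ := List.chain_cons.mp hc
      obtain ⟨l'', hc'', hlast, hsub⟩ := ih a hct hv'
      refine ⟨a :: l'', List.chain_cons.mpr ⟨hsa, hc''⟩, ?_, hsub.cons₂ s⟩
      rw [List.getLast_cons (by simp)]
      exact hlast

lemma chain_concat {V : Type} (R : V → V → Prop) (c : V) :
    ∀ (l : List V) (s : V), l.Chain R s → R ((s :: l).getLast (by simp)) c →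
      (l ++ [c]).Chain R s := by
  intro l
  induction l with
  | nil => intro s _ h; exact List.chain_cons.mpr ⟨by simpa using h, List.Chain.nil⟩
  | cons a t ih =>
    intro s hc hR
    obtain ⟨hsa, hct⟩ := List.chain_cons.mp hc
    refine List.chain_cons.mpr ⟨hsa, ih a hct ?_⟩
    rwa [List.getLast_cons (by simp)] at hR

lemma exists_nodup_chain_s17 {V : Type} (R : V → V → Prop) {s v : V}
    (h : Relation.ReflTransGen R s v) :
    ∃ l : List V, l.Chain R s ∧ (s :: l).getLast (by simp) = v ∧ (s :: l).Nodup := by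
  induction h with
  | refl => exact ⟨[], List.Chain.nil, rfl, List.nodup_singleton s⟩
  | tail hb hR ih =>
    rename_i d
    obtain ⟨l, hc, hlast, hnd⟩ := ih
    by_cases hvc : d ∈ s :: l
    · obtain ⟨l', hc', hlast', hsub⟩ := trunc R d l s hc hvc
      exact ⟨l', hc', hlast', hsub.nodup hnd⟩
    · have hR' : R ((s :: l).getLast (by simp)) d := by rw [hlast]; exact hR
      refine ⟨l ++ [d], chain_concat R d l s hc hR', ?_, ?_⟩
      · show ((s :: l) ++ [d]).getLast (by simp) = d
        simp
      · show ((s :: l) ++ [d]).Nodup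
        rw [List.nodup_append]
        refine ⟨hnd, List.nodup_singleton d, ?_⟩
        intro a ha b hb hab
        rw [List.mem_singleton] at hb
        subst hb
        subst hab
        exact hvc ha

lemma exists_pathset {V E : Type} [Fintype E] (src dst : E → V) (openE : E → Prop) :
    ∀ (l : List V) (s : V),
      l.Chain (fun u w => ∃ e, openE e ∧ src e = u ∧ dst e = w) s →
      (s :: l).Nodup →
      ∃ F : Finset E, (∀ e ∈ F, openE e) ∧ (∀ e ∈ F, dst e ∈ l) ∧
        ∀ r : V, ((F.filter (fun e => dst e = r)).card : ℝ)
            - ((F.filter (fun e => src e = r)).card : ℝ)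
          = (if r = (s :: l).getLast (by simp) then 1 else 0) - (if r = s then 1 else 0) := by
  intro l
  induction l with
  | nil =>
    intro s _ _
    exact ⟨∅, by simp, by simp, fun r => by
      change _ = (if r = s then (1:ℝ) else 0) - (if r = s then 1 else 0); simp⟩
  | cons b t ih =>
    intro s hc hnd
    obtain ⟨⟨e₀, he₀, hsrc₀, hdst₀⟩, hct⟩ := List.chain_cons.mp hc
    have hnd' : (b :: t).Nodup := hnd.of_cons
    obtain ⟨F', hopen', hdst', hdiv'⟩ := ih b hct hnd'
    have he₀F : e₀ ∉ F' := by
      intro hmem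
      have : dst e₀ ∈ t := hdst' e₀ hmem
      rw [hdst₀] at this
      exact (List.nodup_cons.mp hnd').1 this
    refine ⟨insert e₀ F', ?_, ?_, ?_⟩
    · intro e he
      rcases Finset.mem_insert.mp he with h | h
      · exact h ▸ he₀
      · exact hopen' e h
    · intro e he
      rcases Finset.mem_insert.mp he with h | h
      · subst h; rw [hdst₀]; exact List.mem_cons_self
      · exact List.mem_cons_of_mem b (hdst' e h)
    · intro r
      have hcard : ∀ p : E → Prop,
          (((insert e₀ F').filter (fun e => p e)).card : ℝ)
            = (if p e₀ then 1 else 0) + ((F'.filter (fun e => p e)).card : ℝ) := by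
        intro p
        rw [Finset.filter_insert]
        by_cases hp : p e₀
        · rw [if_pos hp, if_pos hp, Finset.card_insert_of_notMem (by simp [he₀F])]
          push_cast; ring
        · rw [if_neg hp, if_neg hp, zero_add]
      rw [hcard (fun e => dst e = r), hcard (fun e => src e = r)]
      have hd := hdiv' r
      have hgl : ((s :: b :: t).getLast (by simp)) = ((b :: t).getLast (by simp)) :=
        List.getLast_cons (by simp)
      rw [hgl]
      have h1 : (if dst e₀ = r then (1:ℝ) else 0) = if r = b then 1 else 0 := by
        rw [hdst₀]; simp [eq_comm]
      have h2 : (if src e₀ = r then (1:ℝ) else 0) = if r = s then 1 else 0 := by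
        rw [hsrc₀]; simp [eq_comm]
      rw [h1, h2]
      linarith [hd]

section aux
lemma sum_ind {E : Type} [Fintype E] [DecidableEq E] (F : Finset E) (p : E → Prop) :
    ∑ e ∈ univ.filter p, (if e ∈ F then (1:ℝ) else 0) = ((F.filter p).card : ℝ) := by
  rw [Finset.sum_boole]
  congr 2
  ext e
  simp [and_comm]

lemma swap_sum {V E : Type} [Fintype V] [Fintype E] (x : E → ℝ) (U : Finset V) (f : E → V) :
    ∑ r ∈ U, ∑ e ∈ univ.filter (fun e => f e = r), x e
      = ∑ e : E, if f e ∈ U then x e else 0 := by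
  have h1 : ∀ r ∈ U, ∑ e ∈ univ.filter (fun e => f e = r), x e
      = ∑ e : E, if f e = r then x e else 0 := by
    intro r _; rw [Finset.sum_filter]
  rw [Finset.sum_congr rfl h1, Finset.sum_comm]
  refine Finset.sum_congr rfl fun e _ => ?_
  exact Finset.sum_ite_eq U (f e) (fun _ => x e)
end aux

theorem stmt17 {V E : Type} [Fintype V] [Fintype E] [DecidableEq E]
    (src dst : E → V) (s : V) (θ : E → Bool) (w : V → ℝ) (hw : ∀ v, 0 ≤ w v)
    (𝓔 : Finset (Finset E)) (c : Finset E → ℝ) (B : ℝ)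
    (y : Finset E → Bool) (hy : (∑ Es ∈ 𝓔 with y Es = true, c Es) ≤ B)
    (z : V → ℝ) (x : E → ℝ)
    (hz : ∀ v, v ≠ s → 0 ≤ z v ∧ z v ≤ 1)
    (hx0 : ∀ e, 0 ≤ x e)
    (hx1 : ∀ e, x e ≤ (Fintype.card V : ℝ) - 1)
    (hxcap : ∀ e, x e ≤ ((Fintype.card V : ℝ) - 1) *
      ((∑ Es ∈ 𝓔 with e ∈ Es, (if y Es then (1 : ℝ) else 0)) + (if θ e then 1 else 0)))
    (hflows : (∑ e with src e = s, x e) - (∑ e with dst e = s, x e) = ∑ v with v ≠ s, z v)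
    (hflowr : ∀ r, r ≠ s → (∑ e with dst e = r, x e) - (∑ e with src e = r, x e) = z r) :
    -- an edge is open if present in the sample or protected by a selected action
    let openE : E → Prop := fun e => θ e = true ∨ ∃ Es ∈ 𝓔, y Es = true ∧ e ∈ Es
    let zstar : V → ℝ := fun v => if Reach src dst openE s v then 1 else 0
    ∃ xstar : E → ℝ,
      (∀ v, v ≠ s → 0 ≤ zstar v ∧ zstar v ≤ 1) ∧
      (∀ e, 0 ≤ xstar e) ∧
      (∀ e, xstar e ≤ (Fintype.card V : ℝ) - 1) ∧
      (∀ e, xstar e ≤ ((Fintype.card V : ℝ) - 1) *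
        ((∑ Es ∈ 𝓔 with e ∈ Es, (if y Es then (1 : ℝ) else 0)) + (if θ e then 1 else 0))) ∧
      ((∑ e with src e = s, xstar e) - (∑ e with dst e = s, xstar e)
        = ∑ v with v ≠ s, zstar v) ∧
      (∀ r, r ≠ s → (∑ e with dst e = r, xstar e) - (∑ e with src e = r, xstar e) = zstar r) ∧
      (∑ v with v ≠ s, w v * z v) ≤ ∑ v with v ≠ s, w v * zstar v := by
  intro openE zstar
  -- basic cardinality facts
  have hV1 : 1 ≤ Fintype.card V := Fintype.card_pos_iff.mpr ⟨s⟩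
  have hVR : (0:ℝ) ≤ (Fintype.card V : ℝ) - 1 := by
    have : (1:ℝ) ≤ (Fintype.card V : ℝ) := by exact_mod_cast hV1
    linarith
  set R : Finset V := univ.filter (fun v => v ≠ s ∧ Reach src dst openE s v) with hRdef
  have hmemR : ∀ v, v ∈ R ↔ v ≠ s ∧ Reach src dst openE s v := by
    intro v; simp [hRdef]
  -- per-vertex path flows
  have hpath : ∀ v : V, ∃ F : Finset E, (∀ e ∈ F, openE e) ∧ ∀ r : V,
      ((F.filter (fun e => dst e = r)).card : ℝ) - ((F.filter (fun e => src e = r)).card : ℝ)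
      = if v ∈ R then ((if r = v then (1:ℝ) else 0) - (if r = s then 1 else 0)) else 0 := by
    intro v
    by_cases hv : v ∈ R
    · have hreach : Relation.ReflTransGen
          (fun u w => ∃ e, openE e ∧ src e = u ∧ dst e = w) s v := ((hmemR v).mp hv).2
      obtain ⟨l, hc, hlast, hnd⟩ := exists_nodup_chain_s17 _ hreach
      obtain ⟨F, hopen, _, hdiv⟩ := exists_pathset src dst openE l s hc hnd
      refine ⟨F, hopen, fun r => ?_⟩
      rw [hdiv r, hlast, if_pos hv]
    · exact ⟨∅, by simp, fun r => by simp [hv]⟩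
  choose F hFopen hFdiv using hpath
  set xstar : E → ℝ := fun e => ∑ v ∈ R, (if e ∈ F v then (1:ℝ) else 0) with hxsdef
  -- bound on xstar
  have hcR : (R.card : ℝ) ≤ (Fintype.card V : ℝ) - 1 := by
    have hsub : R ⊆ univ.erase s := by
      intro v hv
      exact Finset.mem_erase.mpr ⟨((hmemR v).mp hv).1, Finset.mem_univ v⟩
    have : R.card ≤ Fintype.card V - 1 := by
      have := Finset.card_le_card hsub
      rwa [Finset.card_erase_of_mem (Finset.mem_univ s), Finset.card_univ] at this
    calc (R.card : ℝ) ≤ ((Fintype.card V - 1 : ℕ) : ℝ) := by exact_mod_cast this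
      _ = (Fintype.card V : ℝ) - 1 := by push_cast [hV1]; ring
  have hxb : ∀ e, xstar e ≤ (Fintype.card V : ℝ) - 1 := by
    intro e
    calc xstar e ≤ ∑ v ∈ R, 1 := Finset.sum_le_sum (fun v _ => by split <;> norm_num)
      _ = (R.card : ℝ) := by rw [Finset.sum_const, nsmul_eq_mul, mul_one]
      _ ≤ _ := hcR
  have hxnn : ∀ e, 0 ≤ xstar e := by
    intro e
    exact Finset.sum_nonneg fun v _ => by split <;> norm_num
  have hSnn : ∀ e, (0:ℝ) ≤ (∑ Es ∈ 𝓔 with e ∈ Es, (if y Es then (1 : ℝ) else 0)) :=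
    fun e => Finset.sum_nonneg fun Es _ => by split <;> norm_num
  have htnn : ∀ e, (0:ℝ) ≤ (if θ e then (1:ℝ) else 0) := fun e => by split <;> norm_num
  -- the key swap identity
  have key : ∀ (f : E → V) (r : V), (∑ e ∈ univ.filter (fun e => f e = r), xstar e)
      = ∑ v ∈ R, (((F v).filter (fun e => f e = r)).card : ℝ) := by
    intro f r
    rw [hxsdef]
    rw [Finset.sum_comm]
    exact Finset.sum_congr rfl fun v _ => sum_ind (F v) (fun e => f e = r)
  refine ⟨xstar, ?_, hxnn, hxb, ?_, ?_, ?_, ?_⟩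
  · intro v _
    constructor <;> · simp only [zstar]; split <;> norm_num
  · -- capacity
    intro e
    by_cases hopen : openE e
    · have h1 : (1:ℝ) ≤ (∑ Es ∈ 𝓔 with e ∈ Es, (if y Es then (1 : ℝ) else 0))
          + (if θ e then 1 else 0) := by
        rcases hopen with hθ | ⟨Es, hEs, hyEs, hmem⟩
        · rw [if_pos hθ]; linarith [hSnn e]
        · have hmemf : Es ∈ 𝓔.filter (fun Es => e ∈ Es) := Finset.mem_filter.mpr ⟨hEs, hmem⟩
          have h0 := Finset.single_le_sum (f := fun Es => if y Es then (1:ℝ) else 0)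
            (fun i _ => by split <;> norm_num) hmemf
          have h2 : (1:ℝ) ≤ ∑ Es ∈ 𝓔 with e ∈ Es, (if y Es then (1 : ℝ) else 0) := by
            simpa [hyEs] using h0
          linarith [htnn e, h2]
      calc xstar e ≤ (Fintype.card V : ℝ) - 1 := hxb e
        _ = ((Fintype.card V : ℝ) - 1) * 1 := by ring
        _ ≤ _ := mul_le_mul_of_nonneg_left h1 hVR
    · have hz0 : xstar e = 0 := by
        rw [hxsdef]
        exact Finset.sum_eq_zero fun v _ => if_neg (fun hmem => hopen (hFopen v e hmem))
      rw [hz0]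
      exact mul_nonneg hVR (add_nonneg (hSnn e) (htnn e))
  · -- conservation at s
    rw [key src s, key dst s, ← Finset.sum_sub_distrib]
    have hL : ∀ v ∈ R, (((F v).filter (fun e => src e = s)).card : ℝ)
        - (((F v).filter (fun e => dst e = s)).card : ℝ) = 1 := by
      intro v hv
      have hd := hFdiv v s
      rw [if_pos hv, if_neg (Ne.symm ((hmemR v).mp hv).1), if_pos rfl] at hd
      linarith
    rw [Finset.sum_congr rfl hL, Finset.sum_const, nsmul_eq_mul, mul_one]
    have : ∑ v ∈ univ.filter (fun v => v ≠ s), zstar v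
        = ((univ.filter (fun v => v ≠ s)).filter (fun v => Reach src dst openE s v)).card := by
      simp only [zstar]
      rw [Finset.sum_boole]
    rw [this]
    congr 2
    rw [hRdef, Finset.filter_filter]
  · -- conservation at r ≠ s
    intro r hr
    rw [key dst r, key src r, ← Finset.sum_sub_distrib]
    have hL : ∀ v ∈ R, (((F v).filter (fun e => dst e = r)).card : ℝ)
        - (((F v).filter (fun e => src e = r)).card : ℝ) = if r = v then 1 else 0 := by
      intro v hv
      have hd := hFdiv v r
      rw [if_pos hv, if_neg hr] at hd
      linarith
    rw [Finset.sum_congr rfl hL, Finset.sum_ite_eq R r (fun _ => (1:ℝ))]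
    simp only [zstar, hmemR r, hr, true_and]
    simp [ne_eq, hr]
  · -- objective
    apply Finset.sum_le_sum
    intro v hv
    have hvns : v ≠ s := (Finset.mem_filter.mp hv).2
    refine mul_le_mul_of_nonneg_left ?_ (hw v)
    by_cases hvr : Reach src dst openE s v
    · simp only [zstar, if_pos hvr]
      exact (hz v hvns).2
    · simp only [zstar, if_neg hvr]
      -- cut argument: z v = 0 for unreachable v
      set U : Finset V := univ.filter (fun u => ¬ Reach src dst openE s u) with hUdef
      have hUs : ∀ r ∈ U, r ≠ s := by
        intro r hrU hrs
        subst hrs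
        exact (Finset.mem_filter.mp hrU).2 Relation.ReflTransGen.refl
      have hvU : v ∈ U := Finset.mem_filter.mpr ⟨Finset.mem_univ v, hvr⟩
      have hxe0 : ∀ e, src e ∉ U → dst e ∈ U → x e = 0 := by
        intro e hsU hdU
        have hsreach : Reach src dst openE s (src e) := by
          by_contra hcon
          exact hsU (Finset.mem_filter.mpr ⟨Finset.mem_univ _, hcon⟩)
        have hnopen : ¬ openE e := by
          intro ho
          exact (Finset.mem_filter.mp hdU).2 (hsreach.tail ⟨e, ho, rfl, rfl⟩)
        have hS0 : (∑ Es ∈ 𝓔 with e ∈ Es, (if y Es then (1 : ℝ) else 0)) = 0 := by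
          refine Finset.sum_eq_zero fun Es hEs => ?_
          have := Finset.mem_filter.mp hEs
          refine if_neg fun hyEs => hnopen (Or.inr ⟨Es, this.1, hyEs, this.2⟩)
        have ht0 : (if θ e then (1:ℝ) else 0) = 0 := by
          refine if_neg fun hθ => hnopen (Or.inl hθ)
        have := hxcap e
        rw [hS0, ht0] at this
        simp at this
        linarith [hx0 e]
      have hsum : ∑ r ∈ U, z r ≤ 0 := by
        have h1 : ∑ r ∈ U, z r
            = ∑ r ∈ U, ((∑ e ∈ univ.filter (fun e => dst e = r), x e)
                - (∑ e ∈ univ.filter (fun e => src e = r), x e)) :=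
          Finset.sum_congr rfl fun r hrU => (hflowr r (hUs r hrU)).symm
        rw [h1, Finset.sum_sub_distrib, swap_sum x U dst, swap_sum x U src,
          ← Finset.sum_sub_distrib]
        refine Finset.sum_nonpos fun e _ => ?_
        by_cases hd : dst e ∈ U
        · by_cases hs : src e ∈ U
          · simp [hd, hs]
          · rw [if_pos hd, if_neg hs, hxe0 e hs hd]
            simp
        · rw [if_neg hd]
          have := hx0 e
          split <;> linarith
      have hzv : z v ≤ ∑ r ∈ U, z r :=
        Finset.single_le_sum (fun r hrU => (hz r (hUs r hrU)).1) hvU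
      linarith
end
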